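/- Let (X, d) be a metric space with basepoint e and η a homeomorphism of [0,∞). Suppose (f_k) is a sequence of η-quasisymmetric bijections of X whose inverses are also η-quasisymmetric, with f_k(e) = e, and suppose f_k(p) → p' for some p, p' ≠ e. Then f_k^{-1}(p') → p as k → ∞. -/

import Mathlib

/-- `f` is `η`-quasisymmetric: `d(f q₁, f p) / d(f q₂, f p) ≤ η (d(q₁,p)/d(q₂,p))`
for all `p, q₁, q₂` with `q₂ ≠ p` (stated in multiplied-out form). -/
def IsQS {X : Type*} [MetricSpace X] (η : ℝ → ℝ) (f : X → X) : Prop :=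
  ∀ p q₁ q₂ : X, q₂ ≠ p →
    dist (f q₁) (f p) ≤ η (dist q₁ p / dist q₂ p) * dist (f q₂) (f p)

/-- `η` is an (increasing) homeomorphism of `[0,∞)` onto itself. -/
def IsHomeoOfIci (η : ℝ → ℝ) : Prop :=
  η 0 = 0 ∧ StrictMonoOn η (Set.Ici (0 : ℝ)) ∧ ContinuousOn η (Set.Ici (0 : ℝ)) ∧
    Set.BijOn η (Set.Ici (0 : ℝ)) (Set.Ici (0 : ℝ))

/-- If `(f_k)` is a sequence of `η`-quasisymmetric bijections of a metric
space `X`, whose inverses `g_k` are also `η`-quasisymmetric, with `f_k e = e`, and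
`f_k p → p'` for some `p ≠ e`, `p' ≠ e`, then `f_k⁻¹ p' → p` as `k → ∞`. -/
theorem stmt5 {X : Type*} [MetricSpace X] (e : X) (η : ℝ → ℝ)
    (hη : IsHomeoOfIci η)
    (f g : ℕ → X → X)
    (hf : ∀ k, IsQS η (f k)) (hg : ∀ k, IsQS η (g k))
    (hbij : ∀ k, Function.Bijective (f k))
    (hinv : ∀ k, Function.LeftInverse (g k) (f k) ∧ Function.RightInverse (g k) (f k))
    (hfe : ∀ k, f k e = e)
    (p p' : X) (hp : p ≠ e) (hp' : p' ≠ e)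
    (hconv : Filter.Tendsto (fun k => f k p) Filter.atTop (nhds p')) :
    Filter.Tendsto (fun k => g k p') Filter.atTop (nhds p) := by
  obtain ⟨hη0, hmono, hcont, hbijη⟩ := hη
  -- auxiliary facts
  have hfpe : ∀ k, f k p ≠ e := by
    intro k h
    exact hp ((hbij k).injective (h.trans (hfe k).symm))
  have hge : ∀ k, g k e = e := by
    intro k
    conv_lhs => rw [← hfe k]
    exact (hinv k).1 e
  have hgfp : ∀ k, g k (f k p) = p := fun k => (hinv k).1 p
  -- the ratio
  set h : ℕ → ℝ := fun k => dist p' (f k p) / dist e (f k p) with hh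
  have hde : Filter.Tendsto (fun k => dist e (f k p)) Filter.atTop (nhds (dist e p')) :=
    (Continuous.tendsto (continuous_const.dist continuous_id) p').comp hconv
  have hdp : Filter.Tendsto (fun k => dist p' (f k p)) Filter.atTop (nhds 0) := by
    have := (tendsto_const_nhds : Filter.Tendsto (fun _ : ℕ => p') Filter.atTop (nhds p')).dist hconv
    simpa using this
  have hdep : dist e p' ≠ 0 := by
    simp [dist_eq_zero]
    exact fun h => hp' h.symm
  have hht : Filter.Tendsto h Filter.atTop (nhds 0) := by
    have := hdp.div hde hdep
    rw [zero_div] at this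
    exact this
  have hhnn : ∀ k, h k ∈ Set.Ici (0 : ℝ) := fun k =>
    div_nonneg dist_nonneg dist_nonneg
  have hηh : Filter.Tendsto (fun k => η (h k)) Filter.atTop (nhds 0) := by
    have hc : ContinuousWithinAt η (Set.Ici (0 : ℝ)) 0 :=
      hcont 0 (by simp)
    have : Filter.Tendsto h Filter.atTop (nhdsWithin 0 (Set.Ici (0 : ℝ))) :=
      tendsto_nhdsWithin_of_tendsto_nhds_of_eventually_within h hht
        (Filter.Eventually.of_forall hhnn)
    have := hc.tendsto.comp this
    rw [hη0] at this
    exact this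
  -- the bound
  have hbound : ∀ k, dist (g k p') p ≤ η (h k) * dist e p := by
    intro k
    have := hg k (f k p) p' e (hfpe k).symm
    rwa [hgfp, hge] at this
  rw [tendsto_iff_dist_tendsto_zero]
  have hlim : Filter.Tendsto (fun k => η (h k) * dist e p) Filter.atTop (nhds 0) := by
    have := hηh.mul_const (dist e p)
    simpa using this
  exact squeeze_zero (fun k => dist_nonneg) hbound hlim
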